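/- Let M be an n×n real symmetric matrix and X ∈ L_n a maximizer of Y ↦ M·Y over L_n, written as the Gram matrix of unit vectors v₁,…,vₙ ∈ ℝⁿ. Then for each i there exists α_i ∈ ℝ with ∑_{j≠i} M_{ij} v_j = α_i v_i. -/

import Mathlib

def elliptope (n : ℕ) : Set (Matrix (Fin n) (Fin n) ℝ) :=
  {X | X.PosSemidef ∧ ∀ i, X i i = 1}

def frob {n : ℕ} (A B : Matrix (Fin n) (Fin n) ℝ) : ℝ :=
  ∑ i, ∑ j, A i j * B i j

theorem stmt8 {n : ℕ} (M X : Matrix (Fin n) (Fin n) ℝ) (hM : M.IsSymm)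
    (hX : X ∈ elliptope n) (hmax : ∀ Y ∈ elliptope n, frob M Y ≤ frob M X)
    (v : Fin n → EuclideanSpace ℝ (Fin n)) (hunit : ∀ i, ‖v i‖ = 1)
    (hgram : ∀ i j, X i j = inner ℝ (v i) (v j)) :
    ∀ i : Fin n, ∃ α : ℝ, ∑ j ∈ Finset.univ.erase i, M i j • v j = α • v i := by
  classical
  intro i
  set w : EuclideanSpace ℝ (Fin n) := ∑ j ∈ Finset.univ.erase i, M i j • v j with hw
  have hexp : ∀ u : EuclideanSpace ℝ (Fin n),
      (inner ℝ u w : ℝ) = ∑ j ∈ Finset.univ.erase i, M i j * inner ℝ u (v j) := by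
    intro u
    rw [hw, inner_sum]
    exact Finset.sum_congr rfl fun j _ => real_inner_smul_right u (v j) (M i j)
  -- key maximality inequality
  have key : ∀ u : EuclideanSpace ℝ (Fin n), ‖u‖ = 1 →
      (inner ℝ u w : ℝ) ≤ inner ℝ (v i) w := by
    intro u hu
    set v' : Fin n → EuclideanSpace ℝ (Fin n) := Function.update v i u with hv'
    have hv'i : v' i = u := Function.update_self i u v
    have hv'j : ∀ j, j ≠ i → v' j = v j := fun j hj => Function.update_of_ne hj u v
    have hv'unit : ∀ j, ‖v' j‖ = 1 := by
      intro j
      by_cases h : j = i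
      · subst h; rw [hv'i]; exact hu
      · rw [hv'j j h]; exact hunit j
    set Y : Matrix (Fin n) (Fin n) ℝ := Matrix.of fun j k => (inner ℝ (v' j) (v' k) : ℝ) with hY
    have hYjk : ∀ j k, Y j k = (inner ℝ (v' j) (v' k) : ℝ) := fun j k => rfl
    have hYdiag : ∀ j, Y j j = 1 := by
      intro j
      rw [hYjk, real_inner_self_eq_norm_mul_norm, hv'unit j, one_mul]
    have hYe : Y ∈ elliptope n := by
      refine ⟨⟨?_, ?_⟩, hYdiag⟩
      · ext j k
        simp only [Matrix.conjTranspose_apply, hYjk, star_trivial]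
        exact (real_inner_comm (v' k) (v' j)).symm
      · intro x
        have hcalc : dotProduct (star x) (Y.mulVec x)
            = (inner ℝ (∑ j, x j • v' j) (∑ j, x j • v' j) : ℝ) := by
          rw [sum_inner]
          simp only [dotProduct, Matrix.mulVec, star_trivial, Pi.star_apply]
          refine Finset.sum_congr rfl fun j _ => ?_
          rw [real_inner_smul_left, inner_sum, Finset.mul_sum]
          simp only [real_inner_smul_right, hYjk]
          rw [Finset.mul_sum]
          exact Finset.sum_congr rfl fun k _ => by ring
        have hfs : (x.sum fun i xi => x.sum fun j xj => star xi * Y i j * xj)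
            = dotProduct (star ⇑x) (Y.mulVec ⇑x) := by
          simp [Finsupp.sum_fintype, dotProduct, Matrix.mulVec, Finset.mul_sum, mul_assoc]
        rw [hfs, hcalc]
        exact real_inner_self_nonneg
    have hle := hmax Y hYe
    -- compute frob difference
    have hXd : ∀ j k, X j k = (inner ℝ (v j) (v k) : ℝ) := hgram
    have hdiff : frob M Y - frob M X
        = 2 * ((inner ℝ u w : ℝ) - inner ℝ (v i) w) := by
      have : frob M Y - frob M X = ∑ j, ∑ k, M j k * (Y j k - X j k) := by
        unfold frob
        rw [← Finset.sum_sub_distrib]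
        refine Finset.sum_congr rfl fun j _ => ?_
        rw [← Finset.sum_sub_distrib]
        exact Finset.sum_congr rfl fun k _ => by ring
      rw [this]
      have hzero : ∀ j k, j ≠ i → k ≠ i → M j k * (Y j k - X j k) = 0 := by
        intro j k hj hk
        rw [hYjk, hXd, hv'j j hj, hv'j k hk, sub_self, mul_zero]
      rw [← Finset.add_sum_erase _ _ (Finset.mem_univ i)]
      have hrow : ∑ k, M i k * (Y i k - X i k)
          = ∑ k ∈ Finset.univ.erase i, M i k * (Y i k - X i k) := by
        rw [← Finset.add_sum_erase _ _ (Finset.mem_univ i)]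
        rw [hYdiag i, (hX.2 i), sub_self, mul_zero, zero_add]
      have hcol : ∀ j, j ≠ i → ∑ k, M j k * (Y j k - X j k) = M j i * (Y j i - X j i) := by
        intro j hj
        rw [Finset.sum_eq_single i]
        · intro k _ hk
          exact hzero j k hj hk
        · intro h; exact absurd (Finset.mem_univ i) h
      have hcolsum : ∑ j ∈ Finset.univ.erase i, ∑ k, M j k * (Y j k - X j k)
          = ∑ j ∈ Finset.univ.erase i, M j i * (Y j i - X j i) := by
        refine Finset.sum_congr rfl fun j hj => hcol j (Finset.ne_of_mem_erase hj)
      rw [hrow, hcolsum]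
      have hrow2 : ∑ k ∈ Finset.univ.erase i, M i k * (Y i k - X i k)
          = (inner ℝ u w : ℝ) - inner ℝ (v i) w := by
        rw [hexp u, hexp (v i), ← Finset.sum_sub_distrib]
        refine Finset.sum_congr rfl fun k hk => ?_
        rw [hYjk, hXd, hv'i, hv'j k (Finset.ne_of_mem_erase hk)]
        ring
      have hcol2 : ∑ j ∈ Finset.univ.erase i, M j i * (Y j i - X j i)
          = (inner ℝ u w : ℝ) - inner ℝ (v i) w := by
        rw [hexp u, hexp (v i), ← Finset.sum_sub_distrib]
        refine Finset.sum_congr rfl fun j hj => ?_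
        rw [hYjk, hXd, hv'i, hv'j j (Finset.ne_of_mem_erase hj)]
        have hMsym : M j i = M i j := hM.apply i j
        rw [hMsym, real_inner_comm u (v j), real_inner_comm (v i) (v j)]
        ring
      rw [hrow2, hcol2]
      ring
    linarith [hle, hdiff]
  -- conclude
  by_cases hw0 : w = 0
  · exact ⟨0, by rw [hw0, zero_smul]⟩
  · refine ⟨‖w‖, ?_⟩
    have hwn : ‖w‖ ≠ 0 := norm_ne_zero_iff.mpr hw0
    set u0 : EuclideanSpace ℝ (Fin n) := ‖w‖⁻¹ • w with hu0
    have hu0n : ‖u0‖ = 1 := by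
      rw [hu0, norm_smul, norm_inv, norm_norm, inv_mul_cancel₀ hwn]
    have h1 : (inner ℝ u0 w : ℝ) = ‖w‖ := by
      rw [hu0, real_inner_smul_left, real_inner_self_eq_norm_mul_norm]
      field_simp
    have h2 : (inner ℝ (v i) w : ℝ) ≤ ‖w‖ := by
      calc (inner ℝ (v i) w : ℝ) ≤ ‖v i‖ * ‖w‖ := real_inner_le_norm _ _
        _ = ‖w‖ := by rw [hunit i, one_mul]
    have h3 : (inner ℝ (v i) w : ℝ) = ‖w‖ := le_antisymm h2 (h1 ▸ key u0 hu0n)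
    have h4 : (inner ℝ (v i) u0 : ℝ) = 1 := by
      rw [hu0, real_inner_smul_right, h3, inv_mul_cancel₀ hwn]
    have h5 : v i = u0 := (inner_eq_one_iff_of_norm_eq_one (hunit i) hu0n).mp h4
    rw [h5, hu0, smul_smul, mul_inv_cancel₀ hwn, one_smul]
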